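/- The longest element w₀^Σ of the finite parabolic subgroup W_Σ centralises W̃: for every w ∈ W̃ one has w₀^Σ w = w w₀^Σ. -/

import Mathlib

/-!
Relative Coxeter groups: common definitions.

`(W, S)` is a Coxeter system (Mathlib's `CoxeterSystem M W`), `ℓ = cs.length`.
For `w : W`, `invSet cs w` is the set `T(w)` of left inversions of `w`, and
`descSet cs w = T(w) ∩ S` is `D(w)`.  For a subset `Sg ⊆ S` (playing the role of `Σ`),
`par Sg` is the standard parabolic subgroup `W_Σ`, `parRefl Sg` its set of
reflections `T_Σ`, `minRight cs Sg = W^Σ`, `minLeft cs Sg = ^ΣW`,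
`relN cs Sg Sg' = N(Σ, Σ')`, `IsLongest cs Sg w` says `w` is a longest element of `W_Σ`,
`longest cs Sg` is the longest element `w₀^Σ`, `relW cs Sg = W̃`,
`complSet cs Sg = Σ^∁`, `tilde cs Sg s = s̃ = w₀^{Σ∪{s}} w₀^Σ`, `relS cs Sg = S̃`,
`relLength cs Sg = ℓ̃ : W → ℕ∞`, and `GoodSubset cs Sg` records the standing
hypotheses (1) and (2) on `Σ`.
-/

namespace RelativeCoxeter

variable {B W : Type*} [Group W] {M : CoxeterMatrix B}

/-- The set `S` of simple reflections of the Coxeter system. -/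
def simpleSet (cs : CoxeterSystem M W) : Set W := Set.range cs.simple

/-- `T(w)`: the set of left inversions of `w`, i.e. reflections `t` with `ℓ(tw) < ℓ(w)`. -/
def invSet (cs : CoxeterSystem M W) (w : W) : Set W :=
  {t | cs.IsReflection t ∧ cs.length (t * w) < cs.length w}

/-- `D(w) = T(w) ∩ S`. -/
def descSet (cs : CoxeterSystem M W) (w : W) : Set W :=
  invSet cs w ∩ simpleSet cs

/-- The standard parabolic subgroup `W_Σ` generated by `Σ`. -/
def par (Sg : Set W) : Subgroup W := Subgroup.closure Sg

/-- `T_Σ`: the set of reflections of the Coxeter system `(W_Σ, Σ)`. -/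
def parRefl (Sg : Set W) : Set W :=
  {t | ∃ u ∈ par Sg, ∃ s ∈ Sg, t = u * s * u⁻¹}

/-- `W^Σ = {w : T(w⁻¹) ∩ T_Σ = ∅}`, minimal-length representatives of `W/W_Σ`. -/
def minRight (cs : CoxeterSystem M W) (Sg : Set W) : Set W :=
  {w | invSet cs w⁻¹ ∩ parRefl Sg = ∅}

/-- `^ΣW = {w : T(w) ∩ T_Σ = ∅}`, minimal-length representatives of `W_Σ\W`. -/
def minLeft (cs : CoxeterSystem M W) (Sg : Set W) : Set W :=
  {w | invSet cs w ∩ parRefl Sg = ∅}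

/-- `N(Σ, Σ') = {y ∈ W^Σ ∩ ^{Σ'}W : y W_Σ y⁻¹ = W_{Σ'}}`. -/
def relN (cs : CoxeterSystem M W) (Sg Sg' : Set W) : Set W :=
  {y | y ∈ minRight cs Sg ∧ y ∈ minLeft cs Sg' ∧
    (fun u => y * u * y⁻¹) '' (par Sg : Set W) = (par Sg' : Set W)}

/-- `w` is a longest element of `W_Σ`. -/
def IsLongest (cs : CoxeterSystem M W) (Sg : Set W) (w : W) : Prop :=
  w ∈ par Sg ∧ ∀ u ∈ par Sg, cs.length u ≤ cs.length w

/-- The longest element `w₀^Σ` of `W_Σ` (defined when it exists; junk value `1` otherwise). -/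
noncomputable def longest (cs : CoxeterSystem M W) (Sg : Set W) : W :=
  letI := Classical.propDecidable (∃ w, IsLongest cs Sg w)
  if h : ∃ w, IsLongest cs Sg w then h.choose else 1

/-- `W̃ = {w : w W_Σ w⁻¹ = W_Σ and T(w) ∩ T_Σ = ∅}`. -/
def relW (cs : CoxeterSystem M W) (Sg : Set W) : Set W :=
  {w | (fun u => w * u * w⁻¹) '' (par Sg : Set W) = (par Sg : Set W) ∧
    invSet cs w ∩ parRefl Sg = ∅}

/-- `Σ^∁ = {s ∈ S ∖ Σ : W_{Σ∪{s}} is finite}`. -/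
def complSet (cs : CoxeterSystem M W) (Sg : Set W) : Set W :=
  {s ∈ simpleSet cs \ Sg | ((par (Sg ∪ {s}) : Set W)).Finite}

/-- `s̃ = w₀^{Σ∪{s}} w₀^Σ`. -/
noncomputable def tilde (cs : CoxeterSystem M W) (Sg : Set W) (s : W) : W :=
  longest cs (Sg ∪ {s}) * longest cs Sg

/-- `S̃ = {s̃ : s ∈ Σ^∁}`. -/
noncomputable def relS (cs : CoxeterSystem M W) (Sg : Set W) : Set W :=
  {w | ∃ s ∈ complSet cs Sg, w = tilde cs Sg s}

/-- `ℓ̃(w) ∈ ℕ ∪ {∞}`: the minimal `q` such that `w = w₁ ⋯ w_q` with all `w_i ∈ S̃`. -/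
noncomputable def relLength (cs : CoxeterSystem M W) (Sg : Set W) (w : W) : ℕ∞ :=
  sInf {q : ℕ∞ | ∃ l : List W, (∀ x ∈ l, x ∈ relS cs Sg) ∧ l.prod = w ∧
    (l.length : ℕ∞) = q}

/-- The standing hypotheses on `Σ`: `Σ ⊆ S`, `W_Σ` is finite, and for every `Σ'` with
`Σ ⊆ Σ' ⊆ S` and `W_{Σ'}` finite, the longest element `w₀^{Σ'}` normalises `W_Σ`. -/
def GoodSubset (cs : CoxeterSystem M W) (Sg : Set W) : Prop :=
  Sg ⊆ simpleSet cs ∧ ((par Sg : Set W)).Finite ∧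
  ∀ Sg' : Set W, Sg ⊆ Sg' → Sg' ⊆ simpleSet cs → ((par Sg' : Set W)).Finite →
    ∀ w0 : W, IsLongest cs Sg' w0 →
      (fun u => w0 * u * w0⁻¹) '' (par Sg : Set W) = (par Sg : Set W)

section Auxiliary

open CoxeterSystem List

variable (cs : CoxeterSystem M W)

theorem rightInvSeq_append (ω₁ ω₂ : List B) :
    cs.rightInvSeq (ω₁ ++ ω₂) =
      (cs.rightInvSeq ω₁).map (fun t => (cs.wordProd ω₂)⁻¹ * t * cs.wordProd ω₂)
        ++ cs.rightInvSeq ω₂ := by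
  induction ω₁ with
  | nil => simp
  | cons i ω₁ ih =>
    rw [cons_append, rightInvSeq, rightInvSeq, ih, map_cons, cons_append, cs.wordProd_append]
    congr 1
    group

theorem leftInvSeq_eq_map (ω : List B) :
    cs.leftInvSeq ω =
      (cs.rightInvSeq ω).map (fun t => cs.wordProd ω * t * (cs.wordProd ω)⁻¹) := by
  induction ω with
  | nil => simp
  | cons i ω ih =>
    rw [leftInvSeq, rightInvSeq, ih, map_cons, map_map, cs.wordProd_cons]
    congr 1
    · group
    · apply List.map_congr_left
      intro t _
      simp only [Function.comp_apply, MulAut.conj_apply]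
      group

theorem leftInvSeq_append (ω₁ ω₂ : List B) :
    cs.leftInvSeq (ω₁ ++ ω₂) =
      cs.leftInvSeq ω₁
        ++ (cs.leftInvSeq ω₂).map (fun t => cs.wordProd ω₁ * t * (cs.wordProd ω₁)⁻¹) := by
  induction ω₁ with
  | nil => simp
  | cons i ω₁ ih =>
    rw [cons_append, leftInvSeq, leftInvSeq, ih, map_append, cs.wordProd_cons, map_map]
    rw [cons_append]
    congr 2
    apply List.map_congr_left
    intro t _
    simp only [Function.comp_apply, MulAut.conj_apply]
    group


theorem simple_mul_pow_comm (i i' : B) (k : ℕ) :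
    cs.simple i' * (cs.simple i * cs.simple i') ^ k
      = ((cs.simple i * cs.simple i') ^ k)⁻¹ * cs.simple i' := by
  have h1 : cs.simple i' * (cs.simple i * cs.simple i') * (cs.simple i')⁻¹
      = (cs.simple i * cs.simple i')⁻¹ := by
    rw [cs.inv_simple, mul_inv_rev, cs.inv_simple, cs.inv_simple]
    rw [← mul_assoc, mul_assoc (cs.simple i' * cs.simple i), cs.simple_mul_simple_self, mul_one]
  calc cs.simple i' * (cs.simple i * cs.simple i') ^ k
      = cs.simple i' * (cs.simple i * cs.simple i') ^ k * (cs.simple i')⁻¹ * cs.simple i' := by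
        group
    _ = (cs.simple i' * (cs.simple i * cs.simple i') * (cs.simple i')⁻¹) ^ k * cs.simple i' := by
        rw [conj_pow]
    _ = ((cs.simple i * cs.simple i') ^ k)⁻¹ * cs.simple i' := by rw [h1, inv_pow]

theorem wordProd_alt_inv_mul (i i' : B) (n : ℕ) :
    (cs.wordProd (alternatingWord i i' n))⁻¹ * cs.wordProd (alternatingWord i i' (n + 1))
      = ((cs.simple i * cs.simple i') ^ n)⁻¹ * cs.simple i' := by
  rw [cs.prod_alternatingWord_eq_mul_pow, cs.prod_alternatingWord_eq_mul_pow]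
  rcases Nat.even_or_odd n with he | ho
  · have h1 : ¬ Even (n + 1) := by simp [Nat.even_add_one, he]
    obtain ⟨a, ha⟩ := he
    have hd1 : n / 2 = a := by omega
    have hd2 : (n + 1) / 2 = a := by omega
    rw [if_pos (by exact ⟨a, ha⟩), if_neg h1, hd1, hd2, one_mul,
      simple_mul_pow_comm cs i i' a, ← mul_assoc, ← mul_inv_rev, ← pow_add, ← ha]
  · have h0 : ¬ Even n := by simp [Nat.not_even_iff_odd.mpr ho]
    have h1 : Even (n + 1) := by simpa [Nat.even_add_one] using h0
    obtain ⟨a, ha⟩ := ho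
    have hd1 : n / 2 = a := by omega
    have hd2 : (n + 1) / 2 = a + 1 := by omega
    rw [if_neg h0, if_pos h1, hd1, hd2, one_mul, mul_inv_rev, cs.inv_simple,
      mul_assoc, simple_mul_pow_comm cs i i' (a + 1), ← mul_assoc, ← mul_inv_rev, ← pow_add]
    have h2 : a + 1 + a = n := by omega
    rw [h2]

theorem rightInvSeq_alternatingWord (i i' : B) (n : ℕ) :
    cs.rightInvSeq (alternatingWord i i' n)
      = (List.range n).map
          (fun k => ((cs.simple i * cs.simple i') ^ (n - 1 - k))⁻¹ * cs.simple i') := by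
  induction n with
  | zero => simp [alternatingWord]
  | succ n ih =>
    rw [alternatingWord_succ' i i' n]
    show cs.rightInvSeq (_ :: _) = _
    rw [rightInvSeq, ih, List.range_succ_eq_map, map_cons]
    congr 1
    · have h : cs.simple (if Even n then i' else i) * cs.wordProd (alternatingWord i i' n)
          = cs.wordProd (alternatingWord i i' (n + 1)) := by
        rw [alternatingWord_succ', cs.wordProd_cons]
      rw [mul_assoc, h, wordProd_alt_inv_mul]
      norm_num
    · rw [map_map]
      apply map_congr_left
      intro k hk
      have h3 : n + 1 - 1 - Nat.succ k = n - 1 - k := by omega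
      simp only [Function.comp_apply, h3]


section EtaAux

variable [DecidableEq W]

theorem simple_mul_simple_mul_cancel (i : B) (x : W) :
    cs.simple i * (cs.simple i * x) = x := by
  rw [← mul_assoc, cs.simple_mul_simple_self, one_mul]

/-- The function underlying the permutation representation of `W` on `W × ZMod 2`. -/
def etaFun (i : B) : W × ZMod 2 → W × ZMod 2 :=
  fun p => (cs.simple i * p.1 * cs.simple i, p.2 + if p.1 = cs.simple i then 1 else 0)

theorem etaFun_involutive (i : B) : Function.Involutive (etaFun cs i) := by
  intro p
  unfold etaFun
  have h1 : cs.simple i * (cs.simple i * p.1 * cs.simple i) * cs.simple i = p.1 := by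
    simp [mul_assoc, simple_mul_simple_mul_cancel, cs.simple_mul_simple_self]
  have h2 : (cs.simple i * p.1 * cs.simple i = cs.simple i) ↔ (p.1 = cs.simple i) := by
    constructor
    · intro h
      have h3 := congrArg (fun x => cs.simple i * x * cs.simple i) h
      rw [h1] at h3
      rw [h3, mul_assoc, cs.simple_mul_simple_self, mul_one]
    · intro h
      rw [h, mul_assoc, cs.simple_mul_simple_self, mul_one]
  have h4 : (1 + 1 : ZMod 2) = 0 := by decide
  ext
  · exact h1
  · simp only [h2]
    split_ifs with h
    · show p.2 + 1 + 1 = p.2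
      rw [add_assoc, h4, add_zero]
    · show p.2 + 0 + 0 = p.2
      simp

/-- The permutation of `W × ZMod 2` associated to a simple reflection. -/
def etaPerm (i : B) : Equiv.Perm (W × ZMod 2) := (etaFun_involutive cs i).toPerm

theorem etaPerm_apply (i : B) (p : W × ZMod 2) :
    etaPerm cs i p = (cs.simple i * p.1 * cs.simple i,
      p.2 + if p.1 = cs.simple i then 1 else 0) := rfl

/-- Main computation: the product of the `etaPerm`s along a word. -/
theorem prod_etaPerm_apply (ω : List B) (p : W × ZMod 2) :
    (ω.map (etaPerm cs)).prod p =
      (cs.wordProd ω * p.1 * (cs.wordProd ω)⁻¹,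
        p.2 + ((cs.rightInvSeq ω).count p.1 : ZMod 2)) := by
  induction ω generalizing p with
  | nil => simp
  | cons i ω ih =>
    rw [map_cons, prod_cons, Equiv.Perm.mul_apply, ih, etaPerm_apply, rightInvSeq]
    have hπ := cs.wordProd_cons i ω
    have hiff : (cs.wordProd ω * p.1 * (cs.wordProd ω)⁻¹ = cs.simple i)
        ↔ ((cs.wordProd ω)⁻¹ * cs.simple i * cs.wordProd ω = p.1) := by
      constructor
      · intro h; rw [← h]; group
      · intro h; rw [← h]; group
    ext
    · simp only [hπ]
      rw [mul_inv_rev, cs.inv_simple]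
      group
    · simp only [hπ, List.count_cons, beq_iff_eq, Nat.cast_add, hiff]
      split_ifs with h
      · push_cast; ring
      · push_cast; ring


theorem count_rightInvSeq_alternatingWord_even (i i' : B) (t : W) :
    Even ((cs.rightInvSeq (alternatingWord i i' (2 * M i i'))).count t) := by
  have hx := cs.simple_mul_simple_pow i i'
  set m := M i i' with hm
  rw [rightInvSeq_alternatingWord, two_mul, List.range_add, map_append, map_map]
  have e1 : List.map (fun k => ((cs.simple i * cs.simple i') ^ (m + m - 1 - k))⁻¹ * cs.simple i')
        (range m)
      = List.map (fun k => ((cs.simple i * cs.simple i') ^ (m - 1 - k))⁻¹ * cs.simple i')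
        (range m) := by
    apply map_congr_left
    intro k hk
    rw [mem_range] at hk
    have h2 : m + m - 1 - k = m + (m - 1 - k) := by omega
    rw [h2, pow_add, hx, one_mul]
  have e2 : List.map ((fun k => ((cs.simple i * cs.simple i') ^ (m + m - 1 - k))⁻¹ * cs.simple i')
        ∘ (fun x => m + x)) (range m)
      = List.map (fun k => ((cs.simple i * cs.simple i') ^ (m - 1 - k))⁻¹ * cs.simple i')
        (range m) := by
    apply map_congr_left
    intro k hk
    rw [mem_range] at hk
    simp only [Function.comp_apply]
    have h1 : m + m - 1 - (m + k) = m - 1 - k := by omega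
    rw [h1]
  rw [e1, e2, List.count_append]
  exact Even.add_self _

theorem etaPerm_braid (i i' : B) : (etaPerm cs i * etaPerm cs i') ^ M i i' = 1 := by
  have hword : ∀ m : ℕ, (etaPerm cs i * etaPerm cs i') ^ m
      = ((alternatingWord i i' (2 * m)).map (etaPerm cs)).prod := by
    intro m
    induction m with
    | zero => simp [alternatingWord]
    | succ m ih =>
      have h2 : 2 * (m + 1) = 2 * m + 1 + 1 := by ring
      rw [h2, alternatingWord_succ' i i' (2 * m + 1), alternatingWord_succ' i i' (2 * m)]
      have hodd : ¬ Even (2 * m + 1) := by rintro ⟨c, hcc⟩; omega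
      have heven : Even (2 * m) := ⟨m, two_mul m⟩
      rw [if_neg hodd, if_pos heven]
      rw [map_cons, map_cons, prod_cons, prod_cons, ← ih, pow_succ', mul_assoc]
  rw [hword]
  apply Equiv.ext
  intro p
  have hπ : cs.wordProd (alternatingWord i i' (2 * M i i')) = 1 := by
    rw [cs.prod_alternatingWord_eq_mul_pow, if_pos (even_two_mul _), one_mul]
    have h3 : 2 * M i i' / 2 = M i i' := by omega
    rw [h3, cs.simple_mul_simple_pow]
  obtain ⟨c, hc⟩ := count_rightInvSeq_alternatingWord_even cs i i' p.1
  have h0 : ((c + c : ℕ) : ZMod 2) = 0 := by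
    push_cast
    rw [← two_mul, show ((2 : ZMod 2)) = 0 from rfl, zero_mul]
  rw [prod_etaPerm_apply, hπ, hc, h0, add_zero]
  simp

noncomputable def etaHom : W →* Equiv.Perm (W × ZMod 2) :=
  cs.lift ⟨etaPerm cs, etaPerm_braid cs⟩

theorem etaHom_wordProd (ω : List B) :
    etaHom cs (cs.wordProd ω) = (ω.map (etaPerm cs)).prod := by
  have hw : cs.wordProd ω = (ω.map cs.simple).prod := rfl
  rw [hw, map_list_prod, map_map]
  congr 1
  apply map_congr_left
  intro j _
  simp only [Function.comp_apply]
  exact cs.lift_apply_simple (etaPerm_braid cs) j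

theorem count_rightInvSeq_parity {ω ω' : List B}
    (h : cs.wordProd ω = cs.wordProd ω') (t : W) :
    ((cs.rightInvSeq ω).count t : ZMod 2) = ((cs.rightInvSeq ω').count t : ZMod 2) := by
  have h1 : (ω.map (etaPerm cs)).prod (t, (0 : ZMod 2))
      = (ω'.map (etaPerm cs)).prod (t, (0 : ZMod 2)) := by
    rw [← etaHom_wordProd, ← etaHom_wordProd, h]
  rw [prod_etaPerm_apply, prod_etaPerm_apply, Prod.mk.injEq] at h1
  simpa using h1.2


theorem conj_left_injective (g : W) : Function.Injective (fun r : W => g * r * g⁻¹) := by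
  intro a b h
  simp only at h
  have h2 := congrArg (fun x => g⁻¹ * x * g) h
  simpa [mul_assoc] using h2

/-- Strong exchange property (right version), for arbitrary words. -/
theorem mem_rightInvSeq_of_lt [DecidableEq W] {ω : List B} {t : W}
    (ht : cs.IsReflection t)
    (hlt : cs.length (cs.wordProd ω * t) < cs.length (cs.wordProd ω)) :
    t ∈ cs.rightInvSeq ω := by
  by_contra hmem
  obtain ⟨u, k, htuk⟩ := ht
  have ht' : cs.IsReflection t := ⟨u, k, htuk⟩
  obtain ⟨α, hα⟩ := cs.wordProd_surjective u
  obtain ⟨ω', hred', hω'⟩ := cs.exists_reduced_word' (cs.wordProd ω * t)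
  set σ : List B := α ++ k :: α.reverse with hσ
  have hπσ : cs.wordProd σ = t := by
    rw [hσ, cs.wordProd_append, cs.wordProd_cons, cs.wordProd_reverse, hα, htuk, mul_assoc]
  have hπ : cs.wordProd (ω' ++ σ) = cs.wordProd ω := by
    rw [cs.wordProd_append, hπσ, ← hω', mul_assoc, ht'.mul_self, mul_one]
  have hparity := count_rightInvSeq_parity cs hπ t
  have hcount0 : (cs.rightInvSeq ω).count t = 0 := List.count_eq_zero.mpr hmem
  -- decompose the inversion sequence of ω' ++ σ
  have hris : cs.rightInvSeq (ω' ++ σ)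
      = (cs.rightInvSeq ω').map (fun r => t⁻¹ * r * t) ++ cs.rightInvSeq σ := by
    rw [rightInvSeq_append, hπσ]
  -- no occurrences of t in the ω' part
  have hA : ((cs.rightInvSeq ω').map (fun r => t⁻¹ * r * t)).count t = 0 := by
    apply List.count_eq_zero.mpr
    intro hmem'
    obtain ⟨r, hr, hrt⟩ := List.mem_map.mp hmem'
    have hrt2 : r = t := by
      calc r = t * (t⁻¹ * r * t) * t⁻¹ := by group
      _ = t * t * t⁻¹ := by rw [hrt]
      _ = t := by group
    rw [hrt2] at hr
    have hinv := cs.isRightInversion_of_mem_rightInvSeq hred' hr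
    have h3 := hinv.2
    rw [← hω', mul_assoc, ht'.mul_self, mul_one] at h3
    omega
  -- the σ part
  have hrisσ : cs.rightInvSeq σ
      = (cs.rightInvSeq α).map
          (fun r => (cs.simple k * u⁻¹)⁻¹ * r * (cs.simple k * u⁻¹))
        ++ (t :: cs.rightInvSeq α.reverse) := by
    rw [hσ, rightInvSeq_append]
    congr 1
    · rw [cs.wordProd_cons, cs.wordProd_reverse, hα]
    · show cs.rightInvSeq (k :: α.reverse) = _
      rw [rightInvSeq, cs.wordProd_reverse, hα]
      congr 1
      rw [htuk]
      group
  have hc1 : (cs.simple k * u⁻¹)⁻¹ * cs.simple k * (cs.simple k * u⁻¹) = t := by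
    rw [htuk, mul_inv_rev, inv_inv, cs.inv_simple]
    have := cs.simple_mul_simple_self k
    calc u * cs.simple k * cs.simple k * (cs.simple k * u⁻¹)
        = u * (cs.simple k * cs.simple k) * cs.simple k * u⁻¹ := by group
      _ = u * cs.simple k * u⁻¹ := by rw [this]; group
  have hA2 : ((cs.rightInvSeq α).map
      (fun r => (cs.simple k * u⁻¹)⁻¹ * r * (cs.simple k * u⁻¹))).count t
      = (cs.rightInvSeq α).count (cs.simple k) := by
    have hinj : Function.Injective
        (fun r : W => (cs.simple k * u⁻¹)⁻¹ * r * (cs.simple k * u⁻¹)) := by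
      have := conj_left_injective (W := W) (cs.simple k * u⁻¹)⁻¹
      simpa using this
    have hcnt := List.count_map_of_injective (cs.rightInvSeq α)
      (fun r : W => (cs.simple k * u⁻¹)⁻¹ * r * (cs.simple k * u⁻¹)) hinj (cs.simple k)
    rw [hc1] at hcnt
    exact hcnt
  have hB : (cs.rightInvSeq α.reverse).count t = (cs.rightInvSeq α).count (cs.simple k) := by
    rw [cs.rightInvSeq_reverse, List.count_reverse, leftInvSeq_eq_map, hα]
    have hinj : Function.Injective (fun r : W => u * r * u⁻¹) := conj_left_injective u
    have hcnt := List.count_map_of_injective (cs.rightInvSeq α)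
      (fun r : W => u * r * u⁻¹) hinj (cs.simple k)
    rw [show u * cs.simple k * u⁻¹ = t from htuk.symm] at hcnt
    exact hcnt
  have htot : (cs.rightInvSeq (ω' ++ σ)).count t
      = 2 * (cs.rightInvSeq α).count (cs.simple k) + 1 := by
    rw [hris, List.count_append, hA, Nat.zero_add, hrisσ, List.count_append, hA2,
      List.count_cons_self, hB]
    ring
  rw [htot, hcount0] at hparity
  push_cast at hparity
  rw [show ((2 : ZMod 2)) = 0 from rfl, zero_mul, zero_add] at hparity
  exact one_ne_zero hparity

/-- Strong exchange property (left version), for arbitrary words. -/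
theorem mem_leftInvSeq_of_lt [DecidableEq W] {ω : List B} {t : W}
    (ht : cs.IsReflection t)
    (hlt : cs.length (t * cs.wordProd ω) < cs.length (cs.wordProd ω)) :
    t ∈ cs.leftInvSeq ω := by
  have h1 : cs.length (cs.wordProd ω.reverse * t) < cs.length (cs.wordProd ω.reverse) := by
    rw [cs.wordProd_reverse]
    have e : (cs.wordProd ω)⁻¹ * t = (t * cs.wordProd ω)⁻¹ := by
      rw [mul_inv_rev, ht.inv]
    rw [e, cs.length_inv, cs.length_inv]
    exact hlt
  have h2 := mem_rightInvSeq_of_lt cs ht h1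
  rw [cs.rightInvSeq_reverse] at h2
  exact List.mem_reverse.mp h2

end EtaAux


theorem wordProd_mem_par {Sg : Set W} {ω : List B}
    (hω : ∀ j ∈ ω, cs.simple j ∈ Sg) : cs.wordProd ω ∈ par Sg := by
  induction ω with
  | nil => rw [cs.wordProd_nil]; exact one_mem _
  | cons i ω ih =>
    rw [cs.wordProd_cons]
    exact mul_mem (Subgroup.subset_closure (hω i mem_cons_self))
      (ih fun j hj => hω j (mem_cons_of_mem i hj))

theorem exists_word_of_mem_par {Sg : Set W} (hS : Sg ⊆ simpleSet cs) {u : W}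
    (hu : u ∈ par Sg) : ∃ ω : List B, (∀ j ∈ ω, cs.simple j ∈ Sg) ∧ cs.wordProd ω = u := by
  induction hu using Subgroup.closure_induction with
  | mem x hx =>
    obtain ⟨i, hi⟩ := hS hx
    exact ⟨[i], by simpa [hi] using hx, by simpa using hi⟩
  | one => exact ⟨[], by simp, cs.wordProd_nil⟩
  | mul x y hx hy ihx ihy =>
    obtain ⟨ω₁, h₁, hπ₁⟩ := ihx
    obtain ⟨ω₂, h₂, hπ₂⟩ := ihy
    exact ⟨ω₁ ++ ω₂, fun j hj => (List.mem_append.mp hj).elim (h₁ j) (h₂ j),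
      by rw [cs.wordProd_append, hπ₁, hπ₂]⟩
  | inv x hx ihx =>
    obtain ⟨ω₁, h₁, hπ₁⟩ := ihx
    exact ⟨ω₁.reverse, fun j hj => h₁ j (List.mem_reverse.mp hj),
      by rw [cs.wordProd_reverse, hπ₁]⟩

theorem exists_reduced_word_of_mem_par [DecidableEq W] {Sg : Set W} (hS : Sg ⊆ simpleSet cs)
    {u : W} (hu : u ∈ par Sg) :
    ∃ ω : List B, (∀ j ∈ ω, cs.simple j ∈ Sg) ∧ cs.IsReduced ω ∧ cs.wordProd ω = u := by
  obtain ⟨ω, hω, hπ⟩ := exists_word_of_mem_par cs hS hu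
  clear hu
  subst hπ
  -- strong induction on the length of the word
  suffices H : ∀ n (ω : List B), ω.length = n → (∀ j ∈ ω, cs.simple j ∈ Sg) →
      ∃ ω₂ : List B, (∀ j ∈ ω₂, cs.simple j ∈ Sg) ∧ cs.IsReduced ω₂ ∧
        cs.wordProd ω₂ = cs.wordProd ω by
    exact H ω.length ω rfl hω
  intro n
  induction n using Nat.strong_induction_on with
  | _ n ih =>
  intro ω hn hω
  subst hn
  by_cases hred : cs.IsReduced ω
  · exact ⟨ω, hω, hred, rfl⟩
  · -- the word is non-reduced: find the first place where the length drops
    have hlt : cs.length (cs.wordProd ω) < ω.length :=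
      lt_of_le_of_ne (cs.length_wordProd_le ω) hred
    have hP : ∃ n, cs.length (cs.wordProd (ω.take n)) < n := ⟨ω.length, by simpa using hlt⟩
    have hPj : cs.length (cs.wordProd (ω.take (Nat.find hP))) < Nat.find hP := Nat.find_spec hP
    have hjpos : Nat.find hP ≠ 0 := by
      intro h0
      rw [h0] at hPj
      omega
    obtain ⟨j', hjeq⟩ : ∃ j', Nat.find hP = j' + 1 := ⟨Nat.find hP - 1, by omega⟩
    rw [hjeq] at hPj
    have hPj' : ¬ cs.length (cs.wordProd (ω.take j')) < j' := Nat.find_min hP (by omega)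
    have hj'len : j' < ω.length := by
      by_contra hge
      push_neg at hge
      rw [List.take_of_length_le (by omega : ω.length ≤ j' + 1)] at hPj
      rw [List.take_of_length_le hge] at hPj'
      omega
    -- the step from j' to j'+1 decreases the length
    have htake : ω.take (j' + 1) = ω.take j' ++ [ω.get ⟨j', hj'len⟩] := by
      rw [← List.take_concat_get hj'len]
      simp
    have hlen1 : cs.length (cs.wordProd (ω.take j')) ≤ j' := by
      calc cs.length (cs.wordProd (ω.take j')) ≤ (ω.take j').length := cs.length_wordProd_le _
        _ ≤ j' := by simp
    have hstep : cs.length (cs.wordProd (ω.take j') * cs.simple (ω.get ⟨j', hj'len⟩))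
        < cs.length (cs.wordProd (ω.take j')) := by
      rcases cs.length_mul_simple (cs.wordProd (ω.take j')) (ω.get ⟨j', hj'len⟩) with h | h
      · exfalso
        rw [htake, cs.wordProd_append, cs.wordProd_singleton] at hPj
        omega
      · omega
    -- strong exchange
    have hmem := mem_rightInvSeq_of_lt cs (cs.isReflection_simple (ω.get ⟨j', hj'len⟩)) hstep
    obtain ⟨kk, hkk, hkkeq⟩ := List.mem_iff_getElem.mp hmem
    rw [cs.length_rightInvSeq] at hkk
    have herase : cs.wordProd (ω.take j') * cs.simple (ω.get ⟨j', hj'len⟩)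
        = cs.wordProd ((ω.take j').eraseIdx kk) := by
      rw [← cs.wordProd_mul_getD_rightInvSeq]
      congr 1
      rw [← hkkeq]
      exact (List.getD_eq_getElem _ 1 (by simpa using hkk)).symm
    -- the new shorter word
    set ω₁ : List B := (ω.take j').eraseIdx kk ++ ω.drop (j' + 1) with hω₁
    have hπ₁ : cs.wordProd ω₁ = cs.wordProd ω := by
      rw [hω₁, cs.wordProd_append, ← herase]
      conv_rhs => rw [← List.take_append_drop (j' + 1) ω]
      rw [cs.wordProd_append, htake, cs.wordProd_append, cs.wordProd_singleton]
    have hlen₁ : ω₁.length < ω.length := by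
      have hkk2 : kk < (ω.take j').length := by simpa using hkk
      have h1 : ((ω.take j').eraseIdx kk).length + 1 = (ω.take j').length :=
        List.length_eraseIdx_add_one hkk2
      have h2 : (ω.take j').length = j' := by
        rw [List.length_take]
        omega
      have h3 : (ω.drop (j' + 1)).length = ω.length - (j' + 1) := by
        rw [List.length_drop]
      rw [hω₁, List.length_append]
      omega
    have hω₁mem : ∀ j ∈ ω₁, cs.simple j ∈ Sg := by
      intro x hx
      apply hω
      rcases List.mem_append.mp hx with h | h
      · exact ((List.eraseIdx_sublist (ω.take j') kk).trans (List.take_sublist j' ω)).subset h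
      · exact (List.drop_sublist (j' + 1) ω).subset h
    obtain ⟨ω₂, a, b, c⟩ := ih ω₁.length hlen₁ ω₁ rfl hω₁mem
    exact ⟨ω₂, a, b, by rw [c, hπ₁]⟩

/-- Any nontrivial element of a standard parabolic subgroup has a left descent in `Sg`. -/
theorem exists_descent_of_mem_par [DecidableEq W] {Sg : Set W} (hS : Sg ⊆ simpleSet cs)
    {u : W} (hu : u ∈ par Sg) (hne : u ≠ 1) :
    ∃ i : B, cs.simple i ∈ Sg ∧ cs.length (cs.simple i * u) < cs.length u := by
  obtain ⟨ω, hmem, hred, hπ⟩ := exists_reduced_word_of_mem_par cs hS hu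
  cases ω with
  | nil => exact absurd (hπ.symm.trans (cs.wordProd_nil)) hne
  | cons i ω' =>
    refine ⟨i, hmem i List.mem_cons_self, ?_⟩
    have h1 : cs.simple i * u = cs.wordProd ω' := by
      rw [← hπ, cs.wordProd_cons, ← mul_assoc, cs.simple_mul_simple_self, one_mul]
    have h2 : cs.length u = ω'.length + 1 := by
      rw [← hπ]
      rw [CoxeterSystem.IsReduced] at hred
      simpa using hred
    calc cs.length (cs.simple i * u) = cs.length (cs.wordProd ω') := by rw [h1]
      _ ≤ ω'.length := cs.length_wordProd_le ω'
      _ < cs.length u := by omega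

/-- Left inversions of elements of `W_Σ` are reflections of `W_Σ`. -/
theorem invSet_subset_parRefl [DecidableEq W] {Sg : Set W} (hS : Sg ⊆ simpleSet cs)
    {u : W} (hu : u ∈ par Sg) : invSet cs u ⊆ parRefl Sg := by
  intro t ht
  obtain ⟨htrefl, htlt⟩ := ht
  obtain ⟨ω, hmem, hred, hπ⟩ := exists_reduced_word_of_mem_par cs hS hu
  rw [← hπ] at htlt
  have h1 := mem_leftInvSeq_of_lt cs htrefl htlt
  obtain ⟨j, hjl, hjeq⟩ := List.mem_iff_getElem.mp h1
  have hj : j < ω.length := by rw [cs.length_leftInvSeq] at hjl; exact hjl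
  have hjeq2 : (cs.leftInvSeq ω).getD j 1 = t := by
    rw [List.getD_eq_getElem _ 1 hjl]
    exact hjeq
  rw [cs.getD_leftInvSeq, List.getElem?_eq_getElem hj] at hjeq2
  simp only [Option.map_some, Option.getD_some] at hjeq2
  exact ⟨cs.wordProd (ω.take j),
    wordProd_mem_par cs (fun x hx => hmem x ((List.take_sublist j ω).subset hx)),
    cs.simple (ω.get ⟨j, hj⟩), hmem _ (by apply List.get_mem), hjeq2.symm⟩

/-- Additivity of length: `ℓ(uw) = ℓ(u) + ℓ(w)` for `u ∈ W_Σ` and `w ∈ ^ΣW`. -/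
theorem length_par_mul [DecidableEq W] {Sg : Set W} (hS : Sg ⊆ simpleSet cs) {w : W}
    (hw : invSet cs w ∩ parRefl Sg = ∅) {u : W} (hu : u ∈ par Sg) :
    cs.length (u * w) = cs.length u + cs.length w := by
  suffices H : ∀ n (u : W), cs.length u = n → u ∈ par Sg →
      cs.length (u * w) = cs.length u + cs.length w by exact H _ u rfl hu
  intro n
  induction n using Nat.strong_induction_on with
  | _ n ih =>
  intro u hn u_mem
  rcases eq_or_ne u 1 with rfl | hne
  · simp
  obtain ⟨i, hiS, hilt⟩ := exists_descent_of_mem_par cs hS u_mem hne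
  set u' := cs.simple i * u with hu'def
  have hu'mem : u' ∈ par Sg := mul_mem (Subgroup.subset_closure hiS) u_mem
  have huu' : u = cs.simple i * u' := by
    rw [hu'def, ← mul_assoc, cs.simple_mul_simple_self, one_mul]
  have hlu' : cs.length u' + 1 = cs.length u := by
    rcases cs.length_simple_mul u i with h | h
    · rw [← hu'def] at h; omega
    · rw [← hu'def] at h; omega
  have ihu' := ih (cs.length u') (by omega) u' rfl hu'mem
  have key : cs.length (cs.simple i * (u' * w)) = cs.length (u' * w) + 1 := by
    rcases cs.length_simple_mul (u' * w) i with h | h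
    · exact h
    · exfalso
      obtain ⟨ω₁, hmem₁, hred₁, hπ₁⟩ := exists_reduced_word_of_mem_par cs hS hu'mem
      obtain ⟨ω₂, hred₂, hπ₂⟩ := cs.exists_reduced_word' w
      have hπ12 : cs.wordProd (ω₁ ++ ω₂) = u' * w := by
        rw [cs.wordProd_append, hπ₁, ← hπ₂]
      have hlt2 : cs.length (cs.simple i * cs.wordProd (ω₁ ++ ω₂))
          < cs.length (cs.wordProd (ω₁ ++ ω₂)) := by rw [hπ12]; omega
      have hmem2 := mem_leftInvSeq_of_lt cs (cs.isReflection_simple i) hlt2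
      rw [leftInvSeq_append] at hmem2
      rcases List.mem_append.mp hmem2 with h2 | h2
      · have h3 := (cs.isLeftInversion_of_mem_leftInvSeq hred₁ h2).2
        rw [hπ₁, ← huu'] at h3
        omega
      · obtain ⟨p, hp, hpeq⟩ := List.mem_map.mp h2
        rw [hπ₁] at hpeq
        have hpinv := (cs.isLeftInversion_of_mem_leftInvSeq hred₂ hp).2
        rw [← hπ₂] at hpinv
        have hpmem : p ∈ invSet cs w :=
          ⟨cs.isReflection_of_mem_leftInvSeq ω₂ hp, hpinv⟩
        have hpval : p = u'⁻¹ * cs.simple i * u' := by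
          calc p = u'⁻¹ * (u' * p * u'⁻¹) * u' := by group
            _ = u'⁻¹ * cs.simple i * u' := by rw [hpeq]
        have hppar : p ∈ parRefl Sg :=
          ⟨u'⁻¹, inv_mem hu'mem, cs.simple i, hiS, by rw [hpval, inv_inv]⟩
        have hcontr : p ∈ invSet cs w ∩ parRefl Sg := ⟨hpmem, hppar⟩
        rw [hw] at hcontr
        exact hcontr
  calc cs.length (u * w) = cs.length (cs.simple i * (u' * w)) := by rw [huu', mul_assoc]
    _ = cs.length (u' * w) + 1 := key
    _ = cs.length u' + cs.length w + 1 := by rw [ihu']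
    _ = cs.length u + cs.length w := by omega

theorem invSet_one : invSet cs 1 = ∅ := by
  ext t
  simp [invSet]

theorem invSet_eq_lis [DecidableEq W] {ω : List B} (hred : cs.IsReduced ω) :
    invSet cs (cs.wordProd ω) = {t | t ∈ cs.leftInvSeq ω} := by
  ext t
  constructor
  · intro ⟨h1, h2⟩
    exact mem_leftInvSeq_of_lt cs h1 h2
  · intro ht
    have := cs.isLeftInversion_of_mem_leftInvSeq hred ht
    exact ⟨this.1, this.2⟩

theorem mem_invSet_simple_mul_iff [DecidableEq W] {w : W} {i : B}
    (hd : cs.length (cs.simple i * w) < cs.length w) (t : W) :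
    t ∈ invSet cs (cs.simple i * w)
      ↔ (cs.simple i * t * cs.simple i ∈ invSet cs w ∧ t ≠ cs.simple i) := by
  obtain ⟨ω', hred', hπ'⟩ := cs.exists_reduced_word' (cs.simple i * w)
  have hwv : w = cs.wordProd (i :: ω') := by
    rw [cs.wordProd_cons, ← hπ', ← mul_assoc, cs.simple_mul_simple_self, one_mul]
  have hredcons : cs.IsReduced (i :: ω') := by
    show cs.length (cs.wordProd (i :: ω')) = (i :: ω').length
    rw [← hwv, List.length_cons]
    have h1 : cs.length (cs.simple i * w) = ω'.length := by rw [hπ']; exact hred'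
    have h2 : cs.length w ≤ cs.length (cs.simple i * w) + 1 := by
      rcases cs.length_simple_mul w i with h | h <;> omega
    omega
  have hlisconsDef : cs.leftInvSeq (i :: ω')
      = cs.simple i :: (cs.leftInvSeq ω').map (⇑(MulAut.conj (cs.simple i))) := rfl
  have hsetw : invSet cs w = {x | x ∈ cs.leftInvSeq (i :: ω')} := by
    rw [hwv]; exact invSet_eq_lis cs hredcons
  have hsetw' : invSet cs (cs.simple i * w) = {x | x ∈ cs.leftInvSeq ω'} := by
    rw [hπ']; exact invSet_eq_lis cs hred'
  constructor
  · intro htmem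
    have ht' : t ∈ cs.leftInvSeq ω' := by rw [hsetw'] at htmem; exact htmem
    have htne : t ≠ cs.simple i := by
      intro hteq
      rw [hteq] at htmem
      have h3 := htmem.2
      rw [← mul_assoc, cs.simple_mul_simple_self, one_mul] at h3
      omega
    refine ⟨?_, htne⟩
    rw [hsetw, hlisconsDef]
    apply List.mem_cons_of_mem
    have : (⇑(MulAut.conj (cs.simple i))) t = cs.simple i * t * cs.simple i := by
      rw [MulAut.conj_apply, cs.inv_simple]
    rw [← this]
    exact List.mem_map_of_mem ht'
  · rintro ⟨hmem, hne⟩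
    rw [hsetw, hlisconsDef] at hmem
    rcases List.mem_cons.mp hmem with h | h
    · exfalso
      apply hne
      calc t = cs.simple i * (cs.simple i * t * cs.simple i) * cs.simple i := by
            rw [← mul_assoc, ← mul_assoc, cs.simple_mul_simple_self, one_mul, mul_assoc,
              cs.simple_mul_simple_self, mul_one]
        _ = cs.simple i * cs.simple i * cs.simple i := by rw [h]
        _ = cs.simple i := by rw [cs.simple_mul_simple_self, one_mul]
    · obtain ⟨p, hp, hpe⟩ := List.mem_map.mp h
      rw [MulAut.conj_apply, cs.inv_simple] at hpe
      have hpt : p = t := by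
        have h5 := congrArg (fun x => cs.simple i * x * cs.simple i) hpe
        calc p = cs.simple i * (cs.simple i * p * cs.simple i) * cs.simple i := by
              rw [← mul_assoc, ← mul_assoc, cs.simple_mul_simple_self, one_mul, mul_assoc,
                cs.simple_mul_simple_self, mul_one]
          _ = cs.simple i * (cs.simple i * t * cs.simple i) * cs.simple i := by rw [hpe]
          _ = t := by
              rw [← mul_assoc, ← mul_assoc, cs.simple_mul_simple_self, one_mul, mul_assoc,
                cs.simple_mul_simple_self, mul_one]
      rw [hsetw']
      exact hpt ▸ hp

theorem eq_of_invSet_eq [DecidableEq W] {u v : W} (h : invSet cs u = invSet cs v) : u = v := by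
  suffices H : ∀ n (u v : W), cs.length u = n → invSet cs u = invSet cs v → u = v from
    H _ u v rfl h
  intro n
  induction n using Nat.strong_induction_on with
  | _ n ih =>
  intro u v hn h
  rcases eq_or_ne u 1 with rfl | hne
  · by_contra hv1
    have hvne : v ≠ 1 := fun hh => hv1 (hh ▸ rfl)
    obtain ⟨i, hi⟩ := cs.exists_leftDescent_of_ne_one hvne
    have h7 : cs.simple i ∈ invSet cs v := ⟨cs.isReflection_simple i, hi⟩
    rw [← h, invSet_one] at h7
    exact h7
  · obtain ⟨i, hi⟩ := cs.exists_leftDescent_of_ne_one hne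
    have hdv : cs.length (cs.simple i * v) < cs.length v := by
      have h6 : cs.simple i ∈ invSet cs u := ⟨cs.isReflection_simple i, hi⟩
      rw [h] at h6
      exact h6.2
    have hinv' : invSet cs (cs.simple i * u) = invSet cs (cs.simple i * v) := by
      ext t
      rw [mem_invSet_simple_mul_iff cs hi t, mem_invSet_simple_mul_iff cs hdv t, h]
    have hlenlt : cs.length (cs.simple i * u) < n := by
      have := hi
      rw [CoxeterSystem.IsLeftDescent] at this
      omega
    have h8 := ih _ hlenlt _ _ rfl hinv'
    exact mul_left_cancel h8


theorem parRefl_subset_invSet_of_longest {Sg : Set W} (hS : Sg ⊆ simpleSet cs) {u : W}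
    (hu : IsLongest cs Sg u) : parRefl Sg ⊆ invSet cs u := by
  rintro t ⟨a, ha, s, hsS, rfl⟩
  obtain ⟨i, hi⟩ := hS hsS
  have htrefl : cs.IsReflection (a * s * a⁻¹) := ⟨a, i, by rw [hi]⟩
  have htmem : a * s * a⁻¹ ∈ par Sg :=
    mul_mem (mul_mem ha (Subgroup.subset_closure hsS)) (inv_mem ha)
  have h1 : cs.length ((a * s * a⁻¹) * u) ≤ cs.length u := hu.2 _ (mul_mem htmem hu.1)
  have h2 := htrefl.length_mul_right_ne u
  exact ⟨htrefl, lt_of_le_of_ne h1 h2⟩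

theorem longest_unique [DecidableEq W] {Sg : Set W} (hS : Sg ⊆ simpleSet cs) {u v : W}
    (hu : IsLongest cs Sg u) (hv : IsLongest cs Sg v) : u = v := by
  apply eq_of_invSet_eq cs
  have h1 : invSet cs u = parRefl Sg :=
    subset_antisymm (invSet_subset_parRefl cs hS hu.1) (parRefl_subset_invSet_of_longest cs hS hu)
  have h2 : invSet cs v = parRefl Sg :=
    subset_antisymm (invSet_subset_parRefl cs hS hv.1) (parRefl_subset_invSet_of_longest cs hS hv)
  rw [h1, h2]

end Auxiliary

variable (cs : CoxeterSystem M W)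

/-- the longest element `w₀^Σ` of `W_Σ` centralises `W̃`. -/
theorem longest_centralises_relW (Sg : Set W) (hSg : GoodSubset cs Sg)
    (w0 : W) (hw0 : IsLongest cs Sg w0) :
    ∀ w ∈ relW cs Sg, w0 * w = w * w0 := by
  classical
  intro w hw
  obtain ⟨hconj, hmin⟩ := hw
  have hS := hSg.1
  have hmapmem : ∀ u : W, u ∈ par Sg → w * u * w⁻¹ ∈ par Sg := by
    intro u hu
    have h : w * u * w⁻¹ ∈ (fun u => w * u * w⁻¹) '' (par Sg : Set W) := ⟨u, hu, rfl⟩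
    rw [hconj] at h
    exact h
  have hpre : ∀ u : W, u ∈ par Sg → ∃ x ∈ par Sg, w * x * w⁻¹ = u := by
    intro u hu
    have h : u ∈ (fun u => w * u * w⁻¹) '' (par Sg : Set W) := by
      rw [hconj]
      exact hu
    obtain ⟨x, hx, hxe⟩ := h
    exact ⟨x, hx, hxe⟩
  have hlen_le : ∀ u : W, u ∈ par Sg → cs.length (w * u * w⁻¹) ≤ cs.length u := by
    intro u hu
    have h1 := length_par_mul cs hS hmin (hmapmem u hu)
    have h2 : (w * u * w⁻¹) * w = w * u := by group
    rw [h2] at h1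
    have h3 := cs.length_mul_le w u
    omega
  obtain ⟨u', hu'mem, hu'e⟩ := hpre w0 hw0.1
  have hle1 : cs.length w0 ≤ cs.length u' := by
    have h4 := hlen_le u' hu'mem
    rw [hu'e] at h4
    exact h4
  have hu'long : IsLongest cs Sg u' := ⟨hu'mem, fun x hx => le_trans (hw0.2 x hx) hle1⟩
  have h5 : u' = w0 := longest_unique cs hS hu'long hw0
  rw [h5] at hu'e
  calc w0 * w = (w * w0 * w⁻¹) * w := by rw [hu'e]
    _ = w * w0 := by group

end RelativeCoxeter
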